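/- Vertex cover dominance rule: if u and v are adjacent vertices of a graph G with N[v] ⊆ N[u], then there exists a minimum vertex cover of G containing u. -/
import Mathlib


open SimpleGraph

/-- Dominance rule for vertex cover: if `u` and `v` are adjacent and `N[v] ⊆ N[u]`,
then some minimum vertex cover of `G` contains `u`. -/
theorem stmt6 {V : Type*} [Fintype V] [DecidableEq V] (G : SimpleGraph V) (u v : V)
    (huv : G.Adj u v)
    (hdom : insert v (G.neighborSet v) ⊆ insert u (G.neighborSet u)) :
    ∃ S : Finset V,
      (∀ ⦃a b : V⦄, G.Adj a b → a ∈ S ∨ b ∈ S) ∧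
      (∀ T : Finset V, (∀ ⦃a b : V⦄, G.Adj a b → a ∈ T ∨ b ∈ T) → S.card ≤ T.card) ∧
      u ∈ S := by
  classical
  obtain ⟨T, hT, hmin⟩ := Finset.exists_min_image
    ((Finset.univ : Finset V).powerset.filter
      (fun T => ∀ ⦃a b : V⦄, G.Adj a b → a ∈ T ∨ b ∈ T))
    Finset.card ⟨Finset.univ, by simp⟩
  simp only [Finset.mem_filter, Finset.mem_powerset] at hT
  have hTcov := hT.2
  have hmin' : ∀ T' : Finset V, (∀ ⦃a b : V⦄, G.Adj a b → a ∈ T' ∨ b ∈ T') →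
      T.card ≤ T'.card := by
    intro T' hT'
    exact hmin T' (by simp [Finset.mem_filter, Finset.mem_powerset]; exact hT')
  by_cases hu : u ∈ T
  · exact ⟨T, hTcov, hmin', hu⟩
  · have hv : v ∈ T := (hTcov huv).resolve_left hu
    have key : ∀ b : V, G.Adj v b → b ∈ insert u (T.erase v) := by
      intro b hvb
      have hb' : b ∈ insert u (G.neighborSet u) :=
        hdom (Set.mem_insert_of_mem _ hvb)
      rcases hb' with hb' | hb'
      · simp [hb']
      · -- G.Adj u b
        have hbT : b ∈ T := (hTcov hb').resolve_left hu
        have hbv : b ≠ v := fun h => hvb.ne' h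
        exact Finset.mem_insert_of_mem (Finset.mem_erase.mpr ⟨hbv, hbT⟩)
    have hcov : ∀ ⦃a b : V⦄, G.Adj a b → a ∈ insert u (T.erase v) ∨ b ∈ insert u (T.erase v) := by
      intro a b hab
      rcases hTcov hab with ha | hb
      · by_cases hav : a = v
        · exact Or.inr (key b (hav ▸ hab))
        · exact Or.inl (Finset.mem_insert_of_mem (Finset.mem_erase.mpr ⟨hav, ha⟩))
      · by_cases hbv : b = v
        · exact Or.inl (key a (hbv ▸ hab.symm))
        · exact Or.inr (Finset.mem_insert_of_mem (Finset.mem_erase.mpr ⟨hbv, hb⟩))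
    have hcard : (insert u (T.erase v)).card = T.card := by
      rw [Finset.card_insert_of_notMem (fun h => hu (Finset.mem_of_mem_erase h)),
        Finset.card_erase_of_mem hv]
      have : 1 ≤ T.card := Finset.card_pos.mpr ⟨v, hv⟩
      omega
    exact ⟨insert u (T.erase v), hcov,
      fun T' hT' => hcard ▸ hmin' T' hT', Finset.mem_insert_self u _⟩
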